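/- Let S ∈ ℝ⟨⟨A⟩⟩ have zero constant term and satisfy S = b − a·exp⧢(2S)·c. Write S = Σ_{n≥1} S_n, where S_n is the homogeneous component of S supported on words of length n. Then S₁ = b, S₂ = −ac, and for every n > 2, S_n = −a·( Σ_{k=1}^{n−2} (2^k/k!) Σ_{n₁+⋯+n_k = n−2, n_j ≥ 1} S_{n₁} ⧢ ⋯ ⧢ S_{n_k} )·c. In particular, the homogeneous components of any such S are determined recursively, so the solution S is unique. -/

import Mathlib

/-! STATEMENT 14: recursive determination of the homogeneous components of a
solution of `S = b − a·exp⧢(2S)·c`, and uniqueness of the solution. -/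

/-! STATEMENT 0: Existence and uniqueness of the noncommutative power series
`S = b − a·exp⧢(2S)·c` with zero constant term. -/

/-- The three-letter alphabet `A = {a, b, c}`. -/
inductive Letter : Type
  | a | b | c
deriving DecidableEq

/-- Words on the alphabet. -/
abbrev Word := List Letter

/-- Noncommutative power series over `ℝ` on the alphabet: a real coefficient
for every word. -/
abbrev Series := Word → ℝ

/-- The series associated to a single word (coefficient `1` on that word, `0` elsewhere). -/
def ofWord (v : Word) : Series := fun w => if w = v then 1 else 0

/-- Concatenation product of series: `⟨PQ, w⟩ = Σ_{uv = w} ⟨P,u⟩⟨Q,v⟩`. -/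
noncomputable def cmul (P Q : Series) : Series :=
  fun w => ∑ i ∈ Finset.range (w.length + 1), P (w.take i) * Q (w.drop i)

/-- The subword of `w` selected by a boolean mask. -/
def select (w : Word) (m : List Bool) : Word :=
  ((w.zip m).filter (fun p => p.2)).map Prod.fst

/-- The (bilinear) shuffle product of two series: the coefficient on `w` is the sum,
over all splittings of the positions of `w` into two complementary subsets, of the
product of the coefficients of the two selected subwords.  This is the bilinear
product determined on words by `ε⧢w = w⧢ε = w` and
`(w₁a₁)⧢(w₂a₂) = (w₁⧢(w₂a₂))a₁ + ((w₁a₁)⧢w₂)a₂`. -/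
noncomputable def shuffle (P Q : Series) : Series := fun w =>
  ∑ m : Fin w.length → Bool,
    P (select w (List.ofFn m)) * Q (select w (List.ofFn (fun i => ! m i)))

/-- Shuffle powers `P^{⧢k}`. -/
noncomputable def shufPow (P : Series) : ℕ → Series
  | 0 => ofWord []
  | k + 1 => shuffle (shufPow P k) P

/-- The shuffle exponential `exp⧢(P) = ε + Σ_{k≥1} P^{⧢k}/k!` (for `P` with zero
constant term only finitely many terms contribute to each coefficient). -/
noncomputable def shufExp (P : Series) : Series :=
  fun w => ∑' k : ℕ, ((k.factorial : ℝ))⁻¹ * shufPow P k w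

/-- The homogeneous component of a series supported on words of length `n`. -/
noncomputable def homog (S : Series) (n : ℕ) : Series :=
  fun w => if w.length = n then S w else 0

/-- The iterated shuffle product `P₁ ⧢ ⋯ ⧢ Pₖ` of a finite family of series. -/
noncomputable def shufList (l : List Series) : Series := l.foldr shuffle (ofWord [])

-- basic lemmas
lemma length_select_le (w : Word) (m : List Bool) : (select w m).length ≤ w.length := by
  unfold select
  calc (((w.zip m).filter (fun p => p.2)).map Prod.fst).length
      = ((w.zip m).filter (fun p => p.2)).length := List.length_map _
    _ ≤ (w.zip m).length := List.length_filter_le _ _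
    _ ≤ w.length := by rw [List.length_zip]; exact min_le_left _ _

lemma length_select_add (w : Word) (m : List Bool) (hm : m.length = w.length) :
    (select w m).length + (select w (m.map not)).length = w.length := by
  induction w generalizing m with
  | nil => simp [select]
  | cons x t ih =>
    cases m with
    | nil => simp at hm
    | cons b l =>
      simp only [List.length_cons, Nat.succ_inj] at hm
      have := ih l hm
      cases b <;> simp [select, List.zip, List.filter] at * <;> omega

lemma select_map_not (w : Word) (m : Fin w.length → Bool) :
    select w (List.ofFn (fun i => ! m i)) = select w ((List.ofFn m).map not) := by
  rw [List.map_ofFn]; rfl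

lemma length_ofFn' (w : Word) (m : Fin w.length → Bool) : (List.ofFn m).length = w.length :=
  List.length_ofFn

lemma shuffle_comm (P Q : Series) : shuffle P Q = shuffle Q P := by
  funext w
  unfold shuffle
  refine Fintype.sum_bijective (fun m i => ! m i) ?_ _ _ (fun m => ?_)
  · exact Function.Involutive.bijective (fun m => by funext i; simp)
  · simp [mul_comm]

lemma shuffle_zero_right (P : Series) (Q : Series) (hQ : ∀ u, Q u = 0) (w : Word) :
    shuffle P Q w = 0 := by
  unfold shuffle; simp [hQ]

lemma shuffle_zero_left (P : Series) (Q : Series) (hP : ∀ u, P u = 0) (w : Word) :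
    shuffle P Q w = 0 := by
  unfold shuffle; simp [hP]

lemma shuffle_sum_right {ι : Type*} (P : Series) (s : Finset ι) (f : ι → Series) (w : Word) :
    shuffle P (fun u => ∑ i ∈ s, f i u) w = ∑ i ∈ s, shuffle P (f i) w := by
  unfold shuffle
  rw [Finset.sum_comm]
  exact Finset.sum_congr rfl fun m _ => by rw [Finset.mul_sum]

lemma shuffle_smul_right (P Q : Series) (r : ℝ) (w : Word) :
    shuffle P (fun u => r * Q u) w = r * shuffle P Q w := by
  unfold shuffle
  rw [Finset.mul_sum]
  exact Finset.sum_congr rfl fun m _ => by ring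

lemma shuffle_smul_left (P Q : Series) (r : ℝ) (w : Word) :
    shuffle (fun u => r * P u) Q w = r * shuffle P Q w := by
  unfold shuffle
  rw [Finset.mul_sum]
  exact Finset.sum_congr rfl fun m _ => by ring

/-- supported-on predicate -/
def SupOn (P : Series) (p : ℕ) : Prop := ∀ w : Word, w.length ≠ p → P w = 0

lemma supOn_homog (S : Series) (n : ℕ) : SupOn (homog S n) n := by
  intro w hw; simp [homog, hw]

lemma supOn_shuffle {P Q : Series} {p q : ℕ} (hP : SupOn P p) (hQ : SupOn Q q) :
    SupOn (shuffle P Q) (p + q) := by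
  intro w hw
  unfold shuffle
  refine Finset.sum_eq_zero fun m _ => ?_
  have hlen := length_select_add w (List.ofFn m) List.length_ofFn
  rw [← select_map_not] at hlen
  by_cases h1 : (select w (List.ofFn m)).length = p
  · have : (select w (List.ofFn fun i => ! m i)).length ≠ q := by omega
    rw [hQ _ this, mul_zero]
  · rw [hP _ h1, zero_mul]

lemma homog_eq_of_supOn {P : Series} {p : ℕ} (hP : SupOn P p) : homog P p = P := by
  funext w
  by_cases h : w.length = p
  · simp [homog, h]
  · simp [homog, h, hP w h]

/-- homogeneous expansion of a shuffle -/
lemma shuffle_homog_expand (P Q : Series) (w : Word) :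
    shuffle P Q w = ∑ pq ∈ Finset.HasAntidiagonal.antidiagonal w.length,
      shuffle (homog P pq.1) (homog Q pq.2) w := by
  unfold shuffle
  rw [Finset.sum_comm]
  refine Finset.sum_congr rfl fun m _ => ?_
  have hlen := length_select_add w (List.ofFn m) List.length_ofFn
  rw [← select_map_not] at hlen
  rw [Finset.sum_eq_single_of_mem
      ((select w (List.ofFn m)).length, (select w (List.ofFn fun i => ! m i)).length)]
  · simp [homog]
  · simpa [Finset.HasAntidiagonal.mem_antidiagonal] using hlen
  · rintro ⟨p, q⟩ hpq hne
    simp only [homog]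
    rw [Finset.HasAntidiagonal.mem_antidiagonal] at hpq
    by_cases h1 : (select w (List.ofFn m)).length = p
    · have h2 : (select w (List.ofFn fun i => ! m i)).length ≠ q := by
        intro h2; exact hne (by simp [← h1, ← h2])
      simp [h2]
    · simp [h1]

lemma shufList_ofFn_succ {k : ℕ} (f : Fin (k + 1) → Series) :
    shufList (List.ofFn f) = shuffle (f 0) (shufList (List.ofFn (fun j => f j.succ))) := by
  rw [List.ofFn_succ]; rfl

lemma supOn_shufList (S : Series) : ∀ (k : ℕ) (ν : Fin k → ℕ),
    SupOn (shufList (List.ofFn fun j => homog S (ν j))) (∑ j, ν j) := by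
  intro k
  induction k with
  | zero =>
    intro ν w hw
    simp only [Finset.univ_eq_empty, Finset.sum_empty] at hw
    simp only [List.ofFn_zero, shufList, List.foldr_nil, ofWord]
    rw [if_neg]
    intro h; subst h; exact hw rfl
  | succ k ih =>
    intro ν
    rw [shufList_ofFn_succ, Fin.sum_univ_succ]
    exact supOn_shuffle (supOn_homog S (ν 0)) (ih (fun j => ν j.succ))

lemma shufPow_succ_comm (S : Series) (k : ℕ) :
    shufPow S (k + 1) = shuffle S (shufPow S k) := by
  show shuffle (shufPow S k) S = _
  rw [shuffle_comm]

lemma shufPow_expand (S : Series) : ∀ (k : ℕ) (w : Word),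
    shufPow S k w = ∑ ν ∈ Finset.Nat.antidiagonalTuple k w.length,
      shufList (List.ofFn fun j => homog S (ν j)) w := by
  intro k
  induction k with
  | zero =>
    intro w
    cases w with
    | nil => simp [shufPow, ofWord, shufList]
    | cons x t =>
      simp [shufPow, ofWord, Finset.Nat.antidiagonalTuple_zero_succ]
  | succ k ih =>
    intro w
    rw [shufPow_succ_comm, shuffle_homog_expand]
    have key : ∀ pq ∈ Finset.HasAntidiagonal.antidiagonal w.length,
        shuffle (homog S pq.1) (homog (shufPow S k) pq.2) w =
        ∑ ν ∈ Finset.Nat.antidiagonalTuple k pq.2,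
          shuffle (homog S pq.1) (shufList (List.ofFn fun j => homog S (ν j))) w := by
      rintro ⟨p, q⟩ _
      have hexp : homog (shufPow S k) q =
          fun u => ∑ ν ∈ Finset.Nat.antidiagonalTuple k q,
            shufList (List.ofFn fun j => homog S (ν j)) u := by
        funext u
        by_cases hu : u.length = q
        · simp only [homog, hu, if_pos rfl, if_true]
          rw [ih u, hu]
        · simp only [homog, hu, if_neg hu]
          refine (Finset.sum_eq_zero fun ν hν => ?_).symm
          have hsum : ∑ j, ν j = q := Finset.Nat.mem_antidiagonalTuple.mp hν
          exact supOn_shufList S k ν u (by rw [hsum]; exact hu)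
      rw [hexp, shuffle_sum_right]
    rw [Finset.sum_congr rfl key]
    rw [Finset.sum_sigma']
    refine Finset.sum_nbij' (fun x => Fin.cons x.1.1 x.2) (fun ν : Fin (k+1) → ℕ => (⟨(ν 0, ∑ j : Fin k, ν j.succ), fun j : Fin k => ν j.succ⟩ : (_ : ℕ × ℕ) × (Fin k → ℕ)))
      ?_ ?_ ?_ ?_ ?_
    · rintro ⟨⟨p, q⟩, ν⟩ hx
      simp only [Finset.mem_sigma, Finset.HasAntidiagonal.mem_antidiagonal, Finset.Nat.mem_antidiagonalTuple] at hx
      rw [Finset.Nat.mem_antidiagonalTuple, Fin.sum_cons, hx.2, hx.1]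
    · intro ν hν
      rw [Finset.Nat.mem_antidiagonalTuple] at hν
      simp only [Finset.mem_sigma, Finset.HasAntidiagonal.mem_antidiagonal, Finset.Nat.mem_antidiagonalTuple]
      refine ⟨by rw [← hν, Fin.sum_univ_succ], trivial⟩
    · rintro ⟨⟨p, q⟩, ν⟩ hx
      simp only [Finset.mem_sigma, Finset.HasAntidiagonal.mem_antidiagonal, Finset.Nat.mem_antidiagonalTuple] at hx
      simp [Fin.cons_zero, Fin.cons_succ, hx.2]
    · intro ν _
      exact Fin.cons_self_tail ν
    · rintro ⟨⟨p, q⟩, ν⟩ _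
      show shuffle (homog S p) (shufList (List.ofFn fun j => homog S (ν j))) w = _
      rw [shufList_ofFn_succ]
      simp [Fin.cons_zero, Fin.cons_succ]

lemma homog_zero_eq (S : Series) (h0 : S [] = 0) (w : Word) : homog S 0 w = 0 := by
  unfold homog
  split
  · next h => rw [List.length_eq_zero_iff.mp h, h0]
  · rfl

lemma shufList_zero_of_zero (S : Series) (h0 : S [] = 0) :
    ∀ (k : ℕ) (ν : Fin k → ℕ) (j : Fin k), ν j = 0 →
      ∀ w, shufList (List.ofFn fun j => homog S (ν j)) w = 0 := by
  intro k
  induction k with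
  | zero => exact fun ν j => j.elim0
  | succ k ih =>
    intro ν j hj w
    rw [shufList_ofFn_succ]
    rcases Fin.eq_zero_or_eq_succ j with rfl | ⟨i, rfl⟩
    · exact shuffle_zero_left _ _ (fun u => by rw [hj]; exact homog_zero_eq S h0 u) w
    · exact shuffle_zero_right _ _ (ih (fun j => ν j.succ) i hj) w

lemma shufPow_vanish (S : Series) (h0 : S [] = 0) (k : ℕ) (w : Word) (h : w.length < k) :
    shufPow S k w = 0 := by
  rw [shufPow_expand]
  refine Finset.sum_eq_zero fun ν hν => ?_
  rw [Finset.Nat.mem_antidiagonalTuple] at hν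
  have : ∃ j, ν j = 0 := by
    by_contra hc
    push_neg at hc
    have : ∀ j, 1 ≤ ν j := fun j => Nat.one_le_iff_ne_zero.mpr (hc j)
    have hk : (k : ℕ) ≤ ∑ j : Fin k, ν j := by
      calc (k : ℕ) = ∑ _j : Fin k, 1 := by simp
        _ ≤ ∑ j, ν j := Finset.sum_le_sum fun j _ => this j
    omega
  obtain ⟨j, hj⟩ := this
  exact shufList_zero_of_zero S h0 k ν j hj w

lemma shufPow_smul (S : Series) (k : ℕ) :
    shufPow ((2 : ℝ) • S) k = fun w => (2 : ℝ) ^ k * shufPow S k w := by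
  induction k with
  | zero => funext w; simp [shufPow]
  | succ k ih =>
    funext w
    show shuffle (shufPow ((2:ℝ) • S) k) ((2:ℝ) • S) w = _
    rw [ih]
    have h2 : ((2:ℝ) • S) = fun u => (2:ℝ) * S u := rfl
    rw [h2, shuffle_smul_left, shuffle_smul_right]
    show (2:ℝ) ^ k * ((2:ℝ) * shuffle (shufPow S k) S w) = _
    rw [pow_succ]
    show _ = 2 ^ k * 2 * shuffle (shufPow S k) S w
    ring

lemma shufExp_eq_sum (S : Series) (h0 : S [] = 0) (u : Word) :
    shufExp ((2 : ℝ) • S) u =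
      ∑ k ∈ Finset.range (u.length + 1), ((k.factorial : ℝ))⁻¹ * (2:ℝ)^k * shufPow S k u := by
  unfold shufExp
  rw [tsum_eq_sum (s := Finset.range (u.length + 1)) (fun k hk => ?_)]
  · exact Finset.sum_congr rfl fun k _ => by rw [shufPow_smul]; ring
  · rw [Finset.mem_range, not_lt] at hk
    have : shufPow ((2:ℝ) • S) k u = 0 := by
      refine shufPow_vanish _ (by simp [h0]) k u (by omega)
    rw [this, mul_zero]

lemma cmul_single_left_nil (x : Letter) (Q : Series) : cmul (ofWord [x]) Q [] = 0 := by
  simp [cmul, ofWord]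

lemma cmul_single_left_cons (x : Letter) (Q : Series) (y : Letter) (t : Word) :
    cmul (ofWord [x]) Q (y :: t) = if y = x then Q t else 0 := by
  unfold cmul
  rw [Finset.sum_eq_single_of_mem 1]
  · simp only [List.take_cons, List.take_zero, List.drop_one, ofWord]
    by_cases hy : y = x
    · simp [hy, List.take]
    · rw [if_neg hy, if_neg (by simp [List.take]; rintro rfl; exact hy rfl)]
      simp
  · simp
  · intro i hi hne
    rw [Finset.mem_range] at hi
    simp only [List.length_cons] at hi
    have hlen : ((y :: t).take i).length = min i (t.length + 1) := by
      simp [List.length_take]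
    rw [ofWord, if_neg, zero_mul]
    intro h
    have := congrArg List.length h
    rw [hlen] at this
    simp only [List.length_singleton] at this
    omega

lemma cmul_single_right_nil (x : Letter) (Q : Series) : cmul Q (ofWord [x]) [] = 0 := by
  simp [cmul, ofWord]

lemma cmul_single_right_concat (x : Letter) (Q : Series) (u : Word) (z : Letter) :
    cmul Q (ofWord [x]) (u ++ [z]) = if z = x then Q u else 0 := by
  unfold cmul
  rw [Finset.sum_eq_single_of_mem u.length]
  · rw [List.take_left, List.drop_left]
    by_cases hz : z = x
    · simp [ofWord, hz]
    · rw [ofWord, if_neg (by simp; rintro rfl; exact hz rfl), if_neg hz, mul_zero]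
  · simp [List.length_append]
  · intro i hi hne
    rw [Finset.mem_range, List.length_append] at hi
    have hlen : (((u ++ [z]).drop i)).length = u.length + 1 - i := by
      simp [List.length_drop, List.length_append]
    rw [ofWord, if_neg, mul_zero]
    intro h
    have := congrArg List.length h
    rw [hlen] at this
    simp only [List.length_singleton] at this
    omega

/-- The `a ⬝ E ⬝ c` sandwich. -/
noncomputable def sand (E : Series) : Series :=
  cmul (ofWord [Letter.a]) (cmul E (ofWord [Letter.c]))

lemma sand_nil (E : Series) : sand E [] = 0 := cmul_single_left_nil _ _

lemma sand_single (E : Series) (y : Letter) : sand E [y] = 0 := by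
  unfold sand
  rw [cmul_single_left_cons]
  simp [cmul_single_right_nil]

lemma sand_cons_concat (E : Series) (y : Letter) (u : Word) (z : Letter) :
    sand E (y :: (u ++ [z])) =
      if y = Letter.a ∧ z = Letter.c then E u else 0 := by
  unfold sand
  rw [cmul_single_left_cons, cmul_single_right_concat]
  by_cases hy : y = Letter.a <;> by_cases hz : z = Letter.c <;> simp [hy, hz]

lemma shufExp_nil (S : Series) (h0 : S [] = 0) : shufExp ((2:ℝ) • S) [] = 1 := by
  rw [shufExp_eq_sum S h0]
  simp [shufPow, ofWord]

lemma shufExp_key (S : Series) (h0 : S [] = 0) (u : Word) (hu : 1 ≤ u.length) :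
    shufExp ((2:ℝ) • S) u =
      ∑ k ∈ Finset.Icc 1 u.length,
        (2:ℝ) ^ k / (Nat.factorial k : ℝ) *
          ∑ ν ∈ (Finset.Nat.antidiagonalTuple k u.length).filter (fun ν => ∀ j, 1 ≤ ν j),
            shufList (List.ofFn (fun j => homog S (ν j))) u := by
  rw [shufExp_eq_sum S h0]
  have hins : Finset.range (u.length + 1) = insert 0 (Finset.Icc 1 u.length) := by
    ext x; simp [Finset.mem_range, Finset.mem_Icc]; omega
  rw [hins, Finset.sum_insert (by simp)]
  have h00 : ((Nat.factorial 0 : ℝ))⁻¹ * (2:ℝ)^0 * shufPow S 0 u = 0 := by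
    have : shufPow S 0 u = 0 := by
      show ofWord [] u = 0
      rw [ofWord, if_neg]
      intro h; rw [h] at hu; simp at hu
    rw [this, mul_zero]
  rw [h00, zero_add]
  refine Finset.sum_congr rfl fun k _ => ?_
  rw [shufPow_expand]
  rw [Finset.sum_filter_of_ne (fun ν hν hne => ?_)]
  · rw [div_eq_mul_inv]; ring
  · by_contra hc
    push_neg at hc
    obtain ⟨j, hj⟩ := hc
    exact hne (shufList_zero_of_zero S h0 k ν j (by omega) u)

lemma F_supOn (S : Series) (n : ℕ) :
    SupOn (fun u => ∑ k ∈ Finset.Icc 1 (n - 2),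
      (2:ℝ) ^ k / (Nat.factorial k : ℝ) *
        ∑ ν ∈ (Finset.Nat.antidiagonalTuple k (n - 2)).filter (fun ν => ∀ j, 1 ≤ ν j),
          shufList (List.ofFn (fun j => homog S (ν j))) u) (n - 2) := by
  intro u hu
  refine Finset.sum_eq_zero fun k _ => ?_
  rw [Finset.sum_eq_zero fun ν hν => ?_, mul_zero]
  rw [Finset.mem_filter, Finset.Nat.mem_antidiagonalTuple] at hν
  exact supOn_shufList S k ν u (by rw [hν.1]; exact hu)

lemma shufPow_congr (S S' : Series) (k : ℕ) :
    ∀ u : Word, (∀ v : Word, v.length ≤ u.length → S v = S' v) →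
      shufPow S k u = shufPow S' k u := by
  induction k with
  | zero => intro u _; rfl
  | succ k ih =>
    intro u h
    show shuffle (shufPow S k) S u = shuffle (shufPow S' k) S' u
    unfold shuffle
    refine Finset.sum_congr rfl fun m _ => ?_
    rw [ih _ (fun v hv => h v (hv.trans (length_select_le _ _))),
      h _ (length_select_le _ _)]

lemma shufExp_congr (S S' : Series) (h0 : S [] = 0) (h0' : S' [] = 0) (u : Word)
    (h : ∀ v : Word, v.length ≤ u.length → S v = S' v) :
    shufExp ((2:ℝ) • S) u = shufExp ((2:ℝ) • S') u := by
  rw [shufExp_eq_sum S h0, shufExp_eq_sum S' h0']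
  exact Finset.sum_congr rfl fun k _ => by rw [shufPow_congr S S' k u h]


/-- If `S` has zero constant term and satisfies `S = b − a·exp⧢(2S)·c`, then its
homogeneous components satisfy `S₁ = b`, `S₂ = −ac`, and for `n > 2`,
`Sₙ = −a·( Σ_{k=1}^{n−2} (2^k/k!) Σ_{n₁+⋯+n_k = n−2, n_j ≥ 1} S_{n₁} ⧢ ⋯ ⧢ S_{n_k} )·c`;
in particular the components are determined recursively, so such an `S` is unique. -/
theorem homog_component_recursion (S : Series) (h0 : S [] = 0)
    (hS : S = ofWord [Letter.b] -
        cmul (ofWord [Letter.a]) (cmul (shufExp ((2 : ℝ) • S)) (ofWord [Letter.c]))) :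
    homog S 1 = ofWord [Letter.b] ∧
    homog S 2 = -ofWord [Letter.a, Letter.c] ∧
    (∀ n : ℕ, 2 < n →
      homog S n =
        -cmul (ofWord [Letter.a])
          (cmul
            (fun u => ∑ k ∈ Finset.Icc 1 (n - 2),
              (2 : ℝ) ^ k / (Nat.factorial k : ℝ) *
                ∑ ν ∈ (Finset.Nat.antidiagonalTuple k (n - 2)).filter
                    (fun ν => ∀ j, 1 ≤ ν j),
                  shufList (List.ofFn (fun j : Fin k => homog S (ν j))) u)
            (ofWord [Letter.c]))) ∧
    (∀ S' : Series, S' [] = 0 →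
      S' = ofWord [Letter.b] -
          cmul (ofWord [Letter.a]) (cmul (shufExp ((2 : ℝ) • S')) (ofWord [Letter.c])) →
      S = S') := by
  have hSw : ∀ w : Word, S w = ofWord [Letter.b] w - sand (shufExp ((2:ℝ) • S)) w := by
    intro w
    conv_lhs => rw [hS]
    rfl
  refine ⟨?_, ?_, ?_, ?_⟩
  · -- homog S 1 = b
    funext w
    by_cases hlen : w.length = 1
    · have hsand : sand (shufExp ((2:ℝ) • S)) w = 0 := by
        rcases w with _ | ⟨y, t⟩
        · exact sand_nil _
        · rcases t with _ | ⟨z, t'⟩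
          · exact sand_single _ _
          · simp at hlen
      rw [homog, if_pos hlen, hSw w, hsand, sub_zero]
    · rw [homog, if_neg hlen, ofWord, if_neg (fun h => hlen (by rw [h]; rfl))]
  · -- homog S 2 = -ac
    funext w
    by_cases hlen : w.length = 2
    · rcases w with _ | ⟨y, t⟩; · simp at hlen
      rcases t with _ | ⟨z, t'⟩; · simp at hlen
      rcases t' with _ | ⟨x', t''⟩
      swap; · simp at hlen
      have hb : ofWord [Letter.b] [y, z] = 0 := by
        rw [ofWord, if_neg]; intro h; injection h with _ h2; injection h2
      have hsand : sand (shufExp ((2:ℝ) • S)) [y, z] =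
          if y = Letter.a ∧ z = Letter.c then 1 else 0 := by
        have : ([y, z] : Word) = y :: (([] : Word) ++ [z]) := rfl
        rw [this, sand_cons_concat, shufExp_nil S h0]
      rw [homog, if_pos hlen, hSw _, hb, hsand, zero_sub]
      show _ = -(ofWord [Letter.a, Letter.c] [y, z])
      by_cases hy : y = Letter.a <;> by_cases hz : z = Letter.c <;>
        simp [ofWord, hy, hz]
    · rw [homog, if_neg hlen]
      show (0:ℝ) = -(ofWord [Letter.a, Letter.c] w)
      rw [ofWord, if_neg (fun h => hlen (by rw [h]; rfl)), neg_zero]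
  · -- recursion
    intro n hn
    funext w
    show homog S n w = -(sand _ w)
    rcases w with _ | ⟨y, t⟩
    · rw [sand_nil, homog]
      simp; omega
    · rcases t.eq_nil_or_concat with rfl | ⟨u, z, rfl⟩
      · rw [sand_single, homog]
        simp; omega
      · simp only [List.concat_eq_append]
        rw [sand_cons_concat]
        have hwlen : (y :: (u ++ [z])).length = u.length + 2 := by simp
        by_cases hc : y = Letter.a ∧ z = Letter.c
        · rw [if_pos hc]
          by_cases hlen : u.length = n - 2
          · have hwn : (y :: (u ++ [z])).length = n := by rw [hwlen]; omega
            rw [homog, if_pos hwn, hSw _]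
            have hb : ofWord [Letter.b] (y :: (u ++ [z])) = 0 := by
              rw [ofWord, if_neg]
              intro h
              have := congrArg List.length h
              rw [hwlen] at this; simp at this
            have hsand : sand (shufExp ((2:ℝ) • S)) (y :: (u ++ [z])) =
                shufExp ((2:ℝ) • S) u := by
              rw [sand_cons_concat, if_pos hc]
            rw [hb, hsand, zero_sub, neg_inj]
            rw [shufExp_key S h0 u (by omega), hlen]
          · have hwn : (y :: (u ++ [z])).length ≠ n := by rw [hwlen]; omega
            rw [homog, if_neg hwn]
            have hz : (∑ k ∈ Finset.Icc 1 (n-2), (2:ℝ)^k / (Nat.factorial k : ℝ) *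
                ∑ ν ∈ (Finset.Nat.antidiagonalTuple k (n-2)).filter (fun ν => ∀ j, 1 ≤ ν j),
                  shufList (List.ofFn (fun j => homog S (ν j))) u) = 0 := F_supOn S n u hlen
            rw [hz, neg_zero]
        · rw [if_neg hc, neg_zero, homog]
          by_cases hwn : (y :: (u ++ [z])).length = n
          · rw [if_pos hwn, hSw _]
            have hb : ofWord [Letter.b] (y :: (u ++ [z])) = 0 := by
              rw [ofWord, if_neg]
              intro h
              have := congrArg List.length h
              rw [hwlen] at this; simp at this
            rw [hb, sand_cons_concat, if_neg hc, sub_zero]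
          · rw [if_neg hwn]
  · -- uniqueness
    intro S' h0' hS'
    have hS'w : ∀ w : Word, S' w = ofWord [Letter.b] w - sand (shufExp ((2:ℝ) • S')) w := by
      intro w
      conv_lhs => rw [hS']
      rfl
    have key : ∀ n : ℕ, ∀ w : Word, w.length = n → S w = S' w := by
      intro n
      induction n using Nat.strong_induction_on with
      | _ n ih =>
        intro w hw
        rw [hSw w, hS'w w]
        congr 1
        rcases w with _ | ⟨y, t⟩
        · rw [sand_nil, sand_nil]
        · rcases t.eq_nil_or_concat with rfl | ⟨u, z, rfl⟩
          · rw [sand_single, sand_single]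
          · simp only [List.concat_eq_append] at hw ⊢
            rw [sand_cons_concat, sand_cons_concat]
            by_cases hc : y = Letter.a ∧ z = Letter.c
            · rw [if_pos hc, if_pos hc]
              refine shufExp_congr S S' h0 h0' u fun v hv => ?_
              have hlt : v.length < n := by
                have : (y :: (u ++ [z])).length = u.length + 2 := by simp
                omega
              exact ih v.length hlt v rfl
            · rw [if_neg hc, if_neg hc]
    funext w
    exact key w.length w rfl
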